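/- arXiv:1410.6590 — 2 statements merged into one kernel-verified Lean document; each statement's English description precedes it below -/
import Mathlib

section
/- Let A be a Lanner system of size n and let s ⊊ Fin n be a nonempty proper subset. Then the principal submatrix A_s of A on s is either elliptic (negative definite over ℝ), or connected parabolic (negative semidefinite but not negative definite, with connected induced graph on s); and in the latter case s has exactly n - 1 elements. -/
open Matrix

/-- A real matrix is negative definite: `xᵀ A x < 0` for every nonzero `x`. -/
def NegDefMat {V : Type*} [Fintype V] (A : Matrix V V ℝ) : Prop :=
  ∀ x : V → ℝ, x ≠ 0 → x ⬝ᵥ A.mulVec x < 0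

/-- A real matrix is negative semidefinite: `xᵀ A x ≤ 0` for every `x`. -/
def NegSemidefMat {V : Type*} [Fintype V] (A : Matrix V V ℝ) : Prop :=
  ∀ x : V → ℝ, x ⬝ᵥ A.mulVec x ≤ 0

/-- A real symmetric matrix has at most one positive eigenvalue (with multiplicity). -/
def AtMostOnePosEig {V : Type*} [Fintype V] [DecidableEq V] (A : Matrix V V ℝ) : Prop :=
  ∃ hA : A.IsHermitian, Fintype.card {i // 0 < hA.eigenvalues i} ≤ 1

/-- The real matrix associated to an integer matrix. -/
def matReal {V : Type*} (A : Matrix V V ℤ) : Matrix V V ℝ := A.map Int.cast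

/-- An at most hyperbolic system of vectors, encoded by its Gram matrix. -/
def IsSystem {V : Type*} [Fintype V] [DecidableEq V] (A : Matrix V V ℤ) : Prop :=
  Nonempty V ∧ A.IsSymm ∧ (∀ i, A i i ≤ -1) ∧ (∀ i j, i ≠ j → 0 ≤ A i j) ∧
    AtMostOnePosEig (matReal A)

/-- The graph of a system: an edge between `i ≠ j` iff `A i j > 0`. -/
def sysGraph {V : Type*} (A : Matrix V V ℤ) : SimpleGraph V :=
  SimpleGraph.fromRel fun i j => 0 < A i j

/-- The principal submatrix of `A` on a subset `s` of indices. -/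
def subMat {V : Type*} (A : Matrix V V ℤ) (s : Finset V) :
    Matrix {i // i ∈ s} {i // i ∈ s} ℤ :=
  A.submatrix Subtype.val Subtype.val

/-- A system is elliptic if its Gram matrix is negative definite over `ℝ`. -/
def IsElliptic {V : Type*} [Fintype V] (A : Matrix V V ℤ) : Prop :=
  NegDefMat (matReal A)

/-- A system is hyperbolic if it is not negative semidefinite over `ℝ`. -/
def IsHyperbolic {V : Type*} [Fintype V] (A : Matrix V V ℤ) : Prop :=
  ¬ NegSemidefMat (matReal A)

/-- A system is Lanner if it is hyperbolic but every proper subsystem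
is negative semidefinite. -/
def IsLanner {V : Type*} [Fintype V] [DecidableEq V] (A : Matrix V V ℤ) : Prop :=
  IsHyperbolic A ∧ ∀ s : Finset V, s ≠ Finset.univ → NegSemidefMat (matReal (subMat A s))

/-- A system is connected parabolic if it is negative semidefinite but not negative
definite over `ℝ` and its graph is connected. -/
def IsConnParabolic {V : Type*} [Fintype V] (A : Matrix V V ℤ) : Prop :=
  NegSemidefMat (matReal A) ∧ ¬ NegDefMat (matReal A) ∧ (sysGraph A).Connected

/-- A system is log canonical if for every subset `s` of indices whose principal
submatrix is negative definite, the canonical coefficients `α` (the unique solution of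
`∑_{j ∈ s} A i j * α j = -A i i - 2` for `i ∈ s`) satisfy `α i ≥ -1` for all `i ∈ s`,
with strict inequality whenever `i` is joined, within the graph of `A` restricted to `s`,
to some `e ∈ s` with `A e e = -1`. -/
def IsLogCanonical {V : Type*} [Fintype V] [DecidableEq V] (A : Matrix V V ℤ) : Prop :=
  ∀ s : Finset V, NegDefMat (matReal (subMat A s)) →
    ∀ α : V → ℝ, (∀ i ∈ s, ∑ j ∈ s, (A i j : ℝ) * α j = -(A i i : ℝ) - 2) →
      (∀ i ∈ s, -1 ≤ α i) ∧
      (∀ i e : {x // x ∈ s}, A e.val e.val = -1 →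
        ((sysGraph A).comap (Subtype.val : {x // x ∈ s} → V)).Reachable i e →
        -1 < α i.val)

/-- An index `e` of the first kind (`A e e = -1`) is contractible if every other
index `i` satisfies `A i e = 0`, or `A i i ≤ -2` and `A i e = 1`. -/
def Contractible {V : Type*} (A : Matrix V V ℤ) (e : V) : Prop :=
  ∀ i, i ≠ e → A i e = 0 ∨ (A i i ≤ -2 ∧ A i e = 1)

/-- A log canonical system is minimal if it contains no contractible element
of the first kind. -/
def IsMinimal {V : Type*} (A : Matrix V V ℤ) : Prop :=
  ¬ ∃ e, A e e = -1 ∧ Contractible A e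

section Aux
lemma isHermitian_of_isSymm' {V : Type*} {M : Matrix V V ℝ} (h : M.IsSymm) :
    M.IsHermitian := by
  unfold Matrix.IsHermitian
  rw [conjTranspose]
  ext i j; have := congrFun (congrFun h i) j; simpa using this

lemma null_mem_kernel' {V : Type*} [Fintype V] {M : Matrix V V ℝ} (hs : M.IsSymm)
    (hn : NegSemidefMat M) {x : V → ℝ} (hx : x ⬝ᵥ M *ᵥ x = 0) : M *ᵥ x = 0 := by
  have hps : (-M).PosSemidef := by
    refine posSemidef_iff_dotProduct_mulVec.mpr ⟨(isHermitian_of_isSymm' hs).neg, fun y => ?_⟩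
    have := hn y
    simp only [star_trivial, neg_mulVec, dotProduct_neg]
    linarith
  have h0 : star x ⬝ᵥ (-M) *ᵥ x = 0 := by
    simp only [star_trivial, neg_mulVec, dotProduct_neg, hx, neg_zero]
  have := (hps.dotProduct_mulVec_zero_iff x).1 h0
  rw [neg_mulVec, neg_eq_zero] at this
  exact this

lemma quad_le_abs' {V : Type*} [Fintype V] [DecidableEq V] {M : Matrix V V ℝ}
    (hoff : ∀ i j, i ≠ j → 0 ≤ M i j) (x : V → ℝ) :
    x ⬝ᵥ M *ᵥ x ≤ (fun i => |x i|) ⬝ᵥ M *ᵥ (fun i => |x i|) := by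
  have hrw : ∀ (y : V → ℝ), y ⬝ᵥ M *ᵥ y = ∑ i, ∑ j, y i * (M i j * y j) := by
    intro y; simp [dotProduct, mulVec, Finset.mul_sum]
  rw [hrw, hrw]
  refine Finset.sum_le_sum fun i _ => Finset.sum_le_sum fun j _ => ?_
  rcases eq_or_ne i j with rfl | hij
  · have h1 : x i * (M i i * x i) = M i i * (x i * x i) := by ring
    have h2 : |x i| * (M i i * |x i|) = M i i * (|x i| * |x i|) := by ring
    rw [h1, h2, abs_mul_abs_self]
  · calc x i * (M i j * x j) ≤ |x i * (M i j * x j)| := le_abs_self _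
      _ = |x i| * (M i j * |x j|) := by
          rw [abs_mul, abs_mul, abs_of_nonneg (hoff i j hij)]

variable {n : ℕ}

lemma restrict_mulVec' (A : Matrix (Fin n) (Fin n) ℤ) (s : Finset (Fin n))
    {x : Fin n → ℝ} (hsupp : ∀ i ∉ s, x i = 0) {i : Fin n} (hi : i ∈ s) :
    (matReal (subMat A s) *ᵥ fun j => x j.val) ⟨i, hi⟩ = (matReal A *ᵥ x) i := by
  simp only [matReal, subMat, mulVec, dotProduct, Matrix.map_apply, Matrix.submatrix_apply]
  rw [← Finset.sum_subtype s (fun _ => Iff.rfl) (fun j => ((A i j : ℝ)) * x j)]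
  exact Finset.sum_subset (Finset.subset_univ s)
    (fun j _ hj => by rw [hsupp j hj, mul_zero])

lemma restrict_quad' (A : Matrix (Fin n) (Fin n) ℤ) (s : Finset (Fin n))
    {x : Fin n → ℝ} (hsupp : ∀ i ∉ s, x i = 0) :
    (fun j : {j // j ∈ s} => x j.val) ⬝ᵥ matReal (subMat A s) *ᵥ (fun j => x j.val)
      = x ⬝ᵥ matReal A *ᵥ x := by
  have h1 : ∀ j : {j // j ∈ s},
      (matReal (subMat A s) *ᵥ fun k : {j // j ∈ s} => x k.val) j = (matReal A *ᵥ x) j.val :=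
    fun j => restrict_mulVec' A s hsupp j.2
  show ∑ j : {j // j ∈ s}, x j.val * _ = ∑ j, x j * _
  rw [Finset.sum_congr rfl (fun j _ => by rw [h1 j])]
  rw [← Finset.sum_subtype s (fun _ => Iff.rfl) (fun j => x j * (matReal A *ᵥ x) j)]
  exact Finset.sum_subset (Finset.subset_univ s)
    (fun j _ hj => by rw [hsupp j hj, zero_mul])

lemma support_quad_le' {A : Matrix (Fin n) (Fin n) ℤ} (hlan : IsLanner A)
    {u : Finset (Fin n)} (hu : u ≠ Finset.univ) {x : Fin n → ℝ}
    (hsupp : ∀ i ∉ u, x i = 0) : x ⬝ᵥ matReal A *ᵥ x ≤ 0 := by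
  rw [← restrict_quad' A u hsupp]
  exact hlan.2 u hu _

lemma ker_rows' {A : Matrix (Fin n) (Fin n) ℤ} (hsymm : A.IsSymm) (hlan : IsLanner A)
    {u : Finset (Fin n)} (hu : u ≠ Finset.univ) {x : Fin n → ℝ}
    (hsupp : ∀ i ∉ u, x i = 0) (hq : x ⬝ᵥ matReal A *ᵥ x = 0) :
    ∀ i ∈ u, (matReal A *ᵥ x) i = 0 := by
  intro i hi
  have hsub : (matReal (subMat A u)).IsSymm := (hsymm.submatrix _).map _
  have hker := null_mem_kernel' hsub (hlan.2 u hu) (x := fun j => x j.val)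
    (by rw [restrict_quad' A u hsupp]; exact hq)
  have h2 := congrFun hker ⟨i, hi⟩
  rw [restrict_mulVec' A u hsupp hi] at h2
  simpa using h2

lemma key_support {A : Matrix (Fin n) (Fin n) ℤ} (hsymm : A.IsSymm)
    (hoff : ∀ i j, i ≠ j → 0 ≤ A i j) (hlan : IsLanner A)
    {s : Finset (Fin n)} (hproper : s ≠ Finset.univ)
    {x : Fin n → ℝ} (hx0 : x ≠ 0) (hxnn : ∀ i, 0 ≤ x i)
    (hsupp : ∀ i ∉ s, x i = 0)
    (hker : ∀ i ∈ s, (matReal A *ᵥ x) i = 0) :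
    (∀ i ∈ s, x i ≠ 0) ∧ s.card = n - 1 := by
  classical
  set t : Finset (Fin n) := s.filter (fun i => x i ≠ 0) with ht
  have htsub : t ⊆ s := Finset.filter_subset _ _
  have htuniv : t ≠ Finset.univ := fun h =>
    hproper (Finset.univ_subset_iff.1 (h ▸ htsub))
  have hsuppt : ∀ i ∉ t, x i = 0 := by
    intro i hi
    by_cases his : i ∈ s
    · by_contra h; exact hi (Finset.mem_filter.2 ⟨his, h⟩)
    · exact hsupp i his
  have htne : t.Nonempty := by
    rw [Finset.nonempty_iff_ne_empty]
    intro h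
    apply hx0; funext i
    exact hsuppt i (by simp [h])
  have hq : x ⬝ᵥ matReal A *ᵥ x = 0 := by
    show ∑ i, x i * (matReal A *ᵥ x) i = 0
    apply Finset.sum_eq_zero
    intro i _
    by_cases his : i ∈ s
    · rw [hker i his, mul_zero]
    · rw [hsupp i his, zero_mul]
  have hclaim : ∀ p ∉ t, insert p t ≠ Finset.univ → ∀ j ∈ t, A p j = 0 := by
    intro p hp hins j hj
    have hxsuppu : ∀ i ∉ insert p t, x i = 0 := fun i hi =>
      hsuppt i (fun h => hi (Finset.mem_insert_of_mem h))
    have hrows := ker_rows' hsymm hlan hins hxsuppu hq p (Finset.mem_insert_self p t)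
    have hrows' : ∑ k, (A p k : ℝ) * x k = 0 := by
      simpa [matReal, mulVec, dotProduct] using hrows
    have hterm : ∀ k : Fin n, 0 ≤ (A p k : ℝ) * x k := by
      intro k
      by_cases hk : k ∈ t
      · have hpk : p ≠ k := fun h => hp (h ▸ hk)
        exact mul_nonneg (by exact_mod_cast hoff p k hpk) (hxnn k)
      · rw [hsuppt k hk, mul_zero]
    have hz := (Finset.sum_eq_zero_iff_of_nonneg (fun k _ => hterm k)).1 hrows' j
      (Finset.mem_univ j)
    have hxj : x j ≠ 0 := (Finset.mem_filter.1 hj).2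
    have : (A p j : ℝ) = 0 := by
      rcases mul_eq_zero.1 hz with h | h
      · exact h
      · exact absurd h hxj
    exact_mod_cast this
  have hex : ∃ p, p ∉ t ∧ insert p t = Finset.univ := by
    by_contra h
    push_neg at h
    have hzero : ∀ p ∉ t, ∀ j ∈ t, A p j = 0 ∧ A j p = 0 := by
      intro p hp j hj
      have h1 := hclaim p hp (h p hp) j hj
      refine ⟨h1, ?_⟩
      have h2 : Aᵀ p j = A p j := congrFun (congrFun hsymm p) j
      rw [Matrix.transpose_apply] at h2
      rw [h2, h1]
    apply hlan.1
    intro z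
    set z1 : Fin n → ℝ := fun i => if i ∈ t then z i else 0 with hz1
    set z2 : Fin n → ℝ := fun i => if i ∈ t then 0 else z i with hz2
    have hz : z = z1 + z2 := by
      funext i; by_cases h : i ∈ t <;> simp [hz1, hz2, h]
    have hcross : ∀ (u v : Fin n → ℝ), (∀ i ∉ t, u i = 0) → (∀ j ∈ t, v j = 0) →
        u ⬝ᵥ matReal A *ᵥ v = 0 := by
      intro u v hu hv
      show ∑ i, u i * (matReal A *ᵥ v) i = 0
      apply Finset.sum_eq_zero
      intro i _
      by_cases hi : i ∈ t
      · have : (matReal A *ᵥ v) i = 0 := by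
          show ∑ j, matReal A i j * v j = 0
          apply Finset.sum_eq_zero
          intro j _
          by_cases hj : j ∈ t
          · rw [hv j hj, mul_zero]
          · have : A j i = 0 := (hzero j hj i hi).1
            have h2 : A i j = 0 := (hzero j hj i hi).2
            simp [matReal, h2]
        rw [this, mul_zero]
      · rw [hu i hi, zero_mul]
    have h1 : z1 ⬝ᵥ matReal A *ᵥ z1 ≤ 0 := by
      apply support_quad_le' hlan htuniv
      intro i hi; simp [hz1, hi]
    have h2 : z2 ⬝ᵥ matReal A *ᵥ z2 ≤ 0 := by
      obtain ⟨a, ha⟩ := htne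
      have hu : Finset.univ \ t ≠ Finset.univ := by
        intro h
        have : a ∈ Finset.univ \ t := h.symm ▸ Finset.mem_univ a
        simp [ha] at this
      apply support_quad_le' hlan hu
      intro i hi
      simp only [Finset.mem_sdiff, Finset.mem_univ, true_and, not_not] at hi
      simp [hz2, hi]
    have hc1 : z1 ⬝ᵥ matReal A *ᵥ z2 = 0 := by
      apply hcross
      · intro i hi; simp [hz1, hi]
      · intro j hj; simp [hz2, hj]
    have hc2 : z2 ⬝ᵥ matReal A *ᵥ z1 = 0 := by
      show ∑ i, z2 i * (matReal A *ᵥ z1) i = 0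
      apply Finset.sum_eq_zero
      intro i _
      by_cases hi : i ∈ t
      · simp [hz2, hi]
      · have : (matReal A *ᵥ z1) i = 0 := by
          show ∑ j, matReal A i j * z1 j = 0
          apply Finset.sum_eq_zero
          intro j _
          by_cases hj : j ∈ t
          · have : A i j = 0 := (hzero i hi j hj).1
            simp [matReal, this]
          · simp [hz1, hj]
        rw [this, mul_zero]
    rw [hz, mulVec_add, dotProduct_add, add_dotProduct, add_dotProduct]
    linarith
  obtain ⟨p, hp, hins⟩ := hex
  have hcardt : t.card = n - 1 := by
    have := Finset.card_insert_of_notMem hp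
    rw [hins, Finset.card_univ, Fintype.card_fin] at this
    omega
  have hcards : s.card ≤ n - 1 := by
    have h1 : s.card < n := by
      have := Finset.card_lt_card (Finset.ssubset_univ_iff.2 hproper)
      simpa using this
    omega
  have hts : t = s := Finset.eq_of_subset_of_card_le htsub (by omega)
  constructor
  · intro i hi
    have : i ∈ t := hts ▸ hi
    exact (Finset.mem_filter.1 this).2
  · rw [← hts]; exact hcardt
end Aux

/-- A proper subsystem of a Lanner system of size `n` is either elliptic or connected
parabolic, and in the latter case it has exactly `n - 1` elements. -/
theorem lanner_proper_subsystem_dichotomy {n : ℕ}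
    (A : Matrix (Fin n) (Fin n) ℤ) (hsys : IsSystem A) (hlan : IsLanner A)
    (s : Finset (Fin n)) (hne : s.Nonempty) (hproper : s ≠ Finset.univ) :
    NegDefMat (matReal (subMat A s)) ∨
      (NegSemidefMat (matReal (subMat A s)) ∧ ¬ NegDefMat (matReal (subMat A s)) ∧
        (sysGraph (subMat A s)).Connected ∧ s.card = n - 1) := by
  classical
  obtain ⟨-, hsymm, -, hoff, -⟩ := hsys
  have hsd := hlan.2 s hproper
  by_cases hdef : NegDefMat (matReal (subMat A s))
  · exact Or.inl hdef
  right
  have hdef' : ∃ y : {i // i ∈ s} → ℝ, y ≠ 0 ∧ y ⬝ᵥ matReal (subMat A s) *ᵥ y = 0 := by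
    simp only [NegDefMat, not_forall] at hdef
    obtain ⟨y, hy0, hyq⟩ := hdef
    exact ⟨y, hy0, le_antisymm (hsd y) (not_lt.1 hyq)⟩
  obtain ⟨y, hy0, hyq⟩ := hdef'
  have hoffs : ∀ i j : {i // i ∈ s}, i ≠ j → 0 ≤ matReal (subMat A s) i j := by
    intro i j hij
    have hv : i.val ≠ j.val := fun h => hij (Subtype.ext h)
    have := hoff i.val j.val hv
    simp only [matReal, subMat, Matrix.map_apply, Matrix.submatrix_apply]
    exact_mod_cast this
  have habs : (fun i => |y i|) ⬝ᵥ matReal (subMat A s) *ᵥ (fun i => |y i|) = 0 :=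
    le_antisymm (hsd _) (hyq ▸ quad_le_abs' hoffs y)
  set x : Fin n → ℝ := fun i => if h : i ∈ s then |y ⟨i, h⟩| else 0 with hx
  have hxnn : ∀ i, 0 ≤ x i := by
    intro i; by_cases h : i ∈ s <;> simp [hx, h, abs_nonneg]
  have hsupp : ∀ i ∉ s, x i = 0 := by intro i h; simp [hx, h]
  have hx0 : x ≠ 0 := by
    have hy : ∃ j : {i // i ∈ s}, y j ≠ 0 := by
      by_contra h; push_neg at h; exact hy0 (funext h)
    obtain ⟨j, hj⟩ := hy
    intro h
    apply hj
    have h2 := congrFun h j.val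
    simp only [hx, Pi.zero_apply, dif_pos j.2] at h2
    rwa [abs_eq_zero, Subtype.coe_eta] at h2
  have hres : (fun j : {j // j ∈ s} => x j.val) = fun j => |y j| := by
    funext j
    simp only [hx, dif_pos j.2, Subtype.coe_eta]
  have hq : x ⬝ᵥ matReal A *ᵥ x = 0 := by
    rw [← restrict_quad' A s hsupp, hres]; exact habs
  have hker := ker_rows' hsymm hlan hproper hsupp hq
  obtain ⟨hfull, hcard⟩ := key_support hsymm hoff hlan hproper hx0 hxnn hsupp hker
  refine ⟨hsd, hdef, ?_, hcard⟩
  rw [SimpleGraph.connected_iff]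
  obtain ⟨a0, ha0⟩ := hne
  refine ⟨?_, ⟨⟨a0, ha0⟩⟩⟩
  intro a b
  by_contra hab
  set c : Finset (Fin n) := s.filter
    (fun j => ∃ h : j ∈ s, (sysGraph (subMat A s)).Reachable a ⟨j, h⟩) with hc
  have hcsub : c ⊆ s := Finset.filter_subset _ _
  have hcuniv : c ≠ Finset.univ := fun h =>
    hproper (Finset.univ_subset_iff.1 (h ▸ hcsub))
  have hac : a.val ∈ c := Finset.mem_filter.2 ⟨a.2, a.2, by rw [Subtype.coe_eta]⟩
  have hbc : b.val ∉ c := by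
    intro h
    obtain ⟨-, h2, hr⟩ := Finset.mem_filter.1 h
    exact hab (by rwa [Subtype.coe_eta] at hr)
  have hzero : ∀ i ∈ c, ∀ j ∈ s, j ∉ c → A i j = 0 ∧ A j i = 0 := by
    intro i hi j hjs hjc
    obtain ⟨his, hi2, hri⟩ := Finset.mem_filter.1 hi
    have hij : i ≠ j := fun h => hjc (h ▸ hi)
    have hnadj : ¬ (sysGraph (subMat A s)).Adj ⟨i, his⟩ ⟨j, hjs⟩ := by
      intro hadj
      exact hjc (Finset.mem_filter.2 ⟨hjs, hjs, hri.trans hadj.reachable⟩)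
    rw [sysGraph, SimpleGraph.fromRel_adj] at hnadj
    push_neg at hnadj
    have hne2 : (⟨i, his⟩ : {k // k ∈ s}) ≠ ⟨j, hjs⟩ := fun h =>
      hij (congrArg Subtype.val h)
    have h3 := hnadj hne2
    simp only [subMat, Matrix.submatrix_apply, not_or, not_lt] at h3
    have h4 := hoff i j hij
    have h5 := hoff j i hij.symm
    omega
  set x1 : Fin n → ℝ := fun i => if i ∈ c then x i else 0 with hx1
  set x2 : Fin n → ℝ := fun i => if i ∈ c then 0 else x i with hx2
  have hxsplit : x = x1 + x2 := by
    funext i; by_cases h : i ∈ c <;> simp [hx1, hx2, h]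
  have hsupp1 : ∀ i ∉ c, x1 i = 0 := by intro i h; simp [hx1, h]
  have hsupp2 : ∀ i ∉ s \ c, x2 i = 0 := by
    intro i h
    simp only [Finset.mem_sdiff, not_and, not_not] at h
    by_cases his : i ∈ s
    · simp [hx2, h his]
    · simp [hx2, hsupp i his]
  have hsc : s \ c ≠ Finset.univ := fun h =>
    hproper (Finset.univ_subset_iff.1 (h ▸ (Finset.sdiff_subset : s \ c ⊆ s)))
  have h1 : x1 ⬝ᵥ matReal A *ᵥ x1 ≤ 0 := support_quad_le' hlan hcuniv hsupp1
  have h2 : x2 ⬝ᵥ matReal A *ᵥ x2 ≤ 0 := support_quad_le' hlan hsc hsupp2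
  have hcross : ∀ (u v : Fin n → ℝ), (∀ i, u i ≠ 0 → i ∈ c) →
      (∀ j, v j ≠ 0 → j ∈ s ∧ j ∉ c) → u ⬝ᵥ matReal A *ᵥ v = 0 := by
    intro u v hu hv
    show ∑ i, u i * (matReal A *ᵥ v) i = 0
    apply Finset.sum_eq_zero
    intro i _
    by_cases hi : u i = 0
    · rw [hi, zero_mul]
    · have hic := hu i hi
      have : (matReal A *ᵥ v) i = 0 := by
        show ∑ j, matReal A i j * v j = 0
        apply Finset.sum_eq_zero
        intro j _
        by_cases hj : v j = 0
        · rw [hj, mul_zero]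
        · obtain ⟨hjs, hjc⟩ := hv j hj
          have := (hzero i hic j hjs hjc).1
          simp [matReal, this]
      rw [this, mul_zero]
  have hu1 : ∀ i, x1 i ≠ 0 → i ∈ c := by
    intro i h; by_contra hic; exact h (by simp [hx1, hic])
  have hv2 : ∀ j, x2 j ≠ 0 → j ∈ s ∧ j ∉ c := by
    intro j h
    constructor
    · by_contra hjs
      exact h (by simp [hx2, hsupp j hjs])
    · intro hjc; exact h (by simp [hx2, hjc])
  have hc1 : x1 ⬝ᵥ matReal A *ᵥ x2 = 0 := hcross x1 x2 hu1 hv2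
  have hc2 : x2 ⬝ᵥ matReal A *ᵥ x1 = 0 := by
    show ∑ i, x2 i * (matReal A *ᵥ x1) i = 0
    apply Finset.sum_eq_zero
    intro i _
    by_cases hi : x2 i = 0
    · rw [hi, zero_mul]
    · obtain ⟨his, hic⟩ := hv2 i hi
      have : (matReal A *ᵥ x1) i = 0 := by
        show ∑ j, matReal A i j * x1 j = 0
        apply Finset.sum_eq_zero
        intro j _
        by_cases hj : x1 j = 0
        · rw [hj, mul_zero]
        · have hjc := hu1 j hj
          have := (hzero j hjc i his hic).2
          simp [matReal, this]
      rw [this, mul_zero]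
  have hq1 : x1 ⬝ᵥ matReal A *ᵥ x1 = 0 := by
    have := hq
    rw [hxsplit, mulVec_add, dotProduct_add, add_dotProduct, add_dotProduct] at this
    linarith
  have hx10 : x1 ≠ 0 := by
    intro h
    have h2 := congrFun h a.val
    simp only [hx1, if_pos hac, Pi.zero_apply] at h2
    exact hfull a.val a.2 h2
  have hx1nn : ∀ i, 0 ≤ x1 i := by
    intro i; by_cases h : i ∈ c <;> simp [hx1, h, hxnn i]
  have hker1 := ker_rows' hsymm hlan hcuniv hsupp1 hq1
  obtain ⟨-, hcardc⟩ := key_support hsymm hoff hlan hcuniv hx10 hx1nn hsupp1 hker1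
  have hlt : c.card < s.card := Finset.card_lt_card
    (Finset.ssubset_iff_subset_ne.2 ⟨hcsub, fun h => hbc (by rw [h]; exact b.2)⟩)
  omega
end

section
/- (Contraction preserves log canonicity) Let A be a log canonical system indexed by Fin (n+1) with n ≥ 1, and let e be an index with A e e = -1 such that for every i ≠ e either A i e = 0, or A i i ≤ -2 and A i e = 1 (e is contractible). Define the contracted matrix Ã, indexed by the indices different from e, by Ã i j = A i j + A i e * A j e. Then Ã is again a system (Ã is symmetric with integer entries, Ã i i ≤ -1 for all i, Ã i j ≥ 0 for i ≠ j, and as a real symmetric matrix Ã has at most one positive eigenvalue), and Ã is log canonical. -/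
open Matrix

section Helpers

lemma sum_split {V : Type*} [Fintype V] [DecidableEq V] (e : V) (f : V → ℝ) :
    ∑ i, f i = f e + ∑ i : {x // x ≠ e}, f i.1 := by
  rw [Fintype.sum_eq_add_sum_compl e f]
  congr 1
  exact (Finset.sum_subtype _ (by simp) _)

lemma form_expand {V : Type*} [Fintype V] (M : Matrix V V ℝ) (y : V → ℝ) :
    y ⬝ᵥ M *ᵥ y = ∑ i, ∑ j, y i * M i j * y j := by
  simp [dotProduct, mulVec, Finset.mul_sum, mul_assoc]

lemma form_subMat {V : Type*} [Fintype V] [DecidableEq V] (A : Matrix V V ℤ) (s : Finset V)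
    (y : V → ℝ) (hy : ∀ j, j ∉ s → y j = 0) :
    (fun i : {x // x ∈ s} => y i.1) ⬝ᵥ (matReal (subMat A s)) *ᵥ (fun i : {x // x ∈ s} => y i.1)
      = y ⬝ᵥ (matReal A) *ᵥ y := by
  rw [form_expand, form_expand]
  have h1 : ∀ i : {x // x ∈ s}, ∑ j : {x // x ∈ s}, y i.1 * matReal (subMat A s) i j * y j.1
      = ∑ j ∈ s, y i.1 * matReal A i.1 j * y j :=
    fun i => Finset.sum_coe_sort s (fun v => y i.1 * matReal A i.1 v * y v)
  calc ∑ i : {x // x ∈ s}, ∑ j : {x // x ∈ s}, y i.1 * matReal (subMat A s) i j * y j.1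
      = ∑ i ∈ s, ∑ j ∈ s, y i * matReal A i j * y j := by
        rw [← Finset.sum_coe_sort s (fun v => ∑ j ∈ s, y v * matReal A v j * y j)]
        exact Finset.sum_congr rfl fun i _ => h1 i
    _ = ∑ i, ∑ j, y i * matReal A i j * y j := by
        rw [Finset.sum_subset (Finset.subset_univ s) (fun i _ hi => by simp [hy i hi])]
        exact Finset.sum_congr rfl fun i _ =>
          Finset.sum_subset (Finset.subset_univ s) (fun j _ hj => by simp [hy j hj])

lemma negDefMat_subMat_iff {V : Type*} [Fintype V] [DecidableEq V]
    (A : Matrix V V ℤ) (s : Finset V) :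
    NegDefMat (matReal (subMat A s)) ↔
      ∀ y : V → ℝ, (∀ j, j ∉ s → y j = 0) → y ≠ 0 → y ⬝ᵥ (matReal A) *ᵥ y < 0 := by
  constructor
  · intro h y hy hne
    rw [← form_subMat A s y hy]
    apply h
    intro hx0
    apply hne
    funext j
    by_cases hj : j ∈ s
    · exact congrFun hx0 ⟨j, hj⟩
    · exact hy j hj
  · intro h x hx
    classical
    set y : V → ℝ := fun j => if hj : j ∈ s then x ⟨j, hj⟩ else 0 with hydef
    have hy : ∀ j, j ∉ s → y j = 0 := fun j hj => dif_neg hj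
    have hxy : (fun i : {x // x ∈ s} => y i.1) = x := by
      funext i
      simp [hydef, i.2]
    rw [← hxy, form_subMat A s y hy]
    apply h y hy
    obtain ⟨i, hi⟩ := Function.ne_iff.mp hx
    intro h0
    apply hi
    rw [← congrFun hxy i, h0]
    rfl

lemma form_eq_sum_eigen {V : Type*} [Fintype V] [DecidableEq V] (M : Matrix V V ℝ)
    (hM : M.IsHermitian) (y : V → ℝ) :
    y ⬝ᵥ M *ᵥ y = ∑ i, hM.eigenvalues i *
      ((star (hM.eigenvectorUnitary : Matrix V V ℝ) *ᵥ y) i)^2 := by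
  set U : Matrix V V ℝ := (hM.eigenvectorUnitary : Matrix V V ℝ)
  set c : V → ℝ := star U *ᵥ y with hc
  conv_lhs => rw [hM.spectral_theorem]
  rw [Unitary.conjStarAlgAut_apply, ← mulVec_mulVec, ← mulVec_mulVec, dotProduct_mulVec]
  have hvU : y ᵥ* U = c := by
    rw [hc, star_eq_conjTranspose, conjTranspose_eq_transpose_of_trivial, mulVec_transpose]
  rw [hvU]
  simp only [dotProduct, mulVec_diagonal, Function.comp_apply, RCLike.ofReal_real_eq_id, id_eq]
  exact Finset.sum_congr rfl fun i _ => by ring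

lemma atMostOnePosEig_transfer {V W : Type*} [Fintype V] [DecidableEq V]
    [Fintype W] [DecidableEq W]
    (A : Matrix V V ℝ) (B : Matrix W W ℝ) (hB : B.IsHermitian)
    (L : (W → ℝ) →ₗ[ℝ] (V → ℝ))
    (hq : ∀ x, (L x) ⬝ᵥ A.mulVec (L x) = x ⬝ᵥ B.mulVec x)
    (hA : AtMostOnePosEig A) : AtMostOnePosEig B := by
  classical
  obtain ⟨hAh, hcard⟩ := hA
  refine ⟨hB, ?_⟩
  by_contra hcon
  push_neg at hcon
  obtain ⟨j₁, j₂, hj12⟩ := Fintype.exists_pair_of_one_lt_card hcon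
  set u₁ : W → ℝ := ⇑(hB.eigenvectorBasis j₁.1) with hu₁
  set u₂ : W → ℝ := ⇑(hB.eigenvectorBasis j₂.1) with hu₂
  set UA : Matrix V V ℝ := (hAh.eigenvectorUnitary : Matrix V V ℝ)
  have hKey : ∀ (k : V), ∃ a b : ℝ, ¬ (a = 0 ∧ b = 0) ∧
      a * (star UA *ᵥ L u₁) k + b * (star UA *ᵥ L u₂) k = 0 := by
    intro k
    set p := (star UA *ᵥ L u₁) k
    set q := (star UA *ᵥ L u₂) k
    by_cases hpq : p = 0 ∧ q = 0
    · exact ⟨1, 0, by simp [hpq.1], by simp [hpq.1]⟩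
    · exact ⟨q, -p, by rintro ⟨h1, h2⟩; exact hpq ⟨by linarith [neg_eq_zero.mp h2], h1⟩,
        by ring⟩
  obtain ⟨a, b, hab, hker⟩ : ∃ a b : ℝ, ¬ (a = 0 ∧ b = 0) ∧
      ∀ i, 0 < hAh.eigenvalues i →
        a * (star UA *ᵥ L u₁) i + b * (star UA *ᵥ L u₂) i = 0 := by
    by_cases hex : ∃ k, 0 < hAh.eigenvalues k
    · obtain ⟨k, hk⟩ := hex
      obtain ⟨a, b, hab, hk0⟩ := hKey k
      refine ⟨a, b, hab, fun i hi => ?_⟩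
      have : (⟨i, hi⟩ : {i // 0 < hAh.eigenvalues i}) = ⟨k, hk⟩ :=
        Fintype.card_le_one_iff.mp hcard _ _
      have hik : i = k := congrArg Subtype.val this
      rw [hik]; exact hk0
    · exact ⟨1, 0, by simp, fun i hi => absurd ⟨i, hi⟩ hex⟩
  set x : W → ℝ := a • u₁ + b • u₂ with hx
  set UB : Matrix W W ℝ := (hB.eigenvectorUnitary : Matrix W W ℝ) with hUB
  have hj12' : j₁.1 ≠ j₂.1 := fun h => hj12 (Subtype.ext h)
  have hcB : star UB *ᵥ x = a • (Pi.single j₁.1 1 : W → ℝ) + b • (Pi.single j₂.1 1 : W → ℝ) := by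
    rw [hx, mulVec_add, mulVec_smul, mulVec_smul, hu₁, hu₂, hUB,
      hB.star_eigenvectorUnitary_mulVec, hB.star_eigenvectorUnitary_mulVec]
  have hcB1 : (star UB *ᵥ x) j₁.1 = a := by
    rw [hcB]; simp [Pi.single_apply, hj12', Ne.symm hj12']
  have hcB2 : (star UB *ᵥ x) j₂.1 = b := by
    rw [hcB]; simp [Pi.single_apply, hj12', Ne.symm hj12']
  have hBx : 0 < x ⬝ᵥ B *ᵥ x := by
    rw [form_eq_sum_eigen B hB x]
    apply Finset.sum_pos'
    · intro i _
      by_cases hci : (star UB *ᵥ x) i = 0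
      · rw [hci]; simp
      · have hipos : 0 < hB.eigenvalues i := by
          by_cases h1 : i = j₁.1
          · rw [h1]; exact j₁.2
          by_cases h2 : i = j₂.1
          · rw [h2]; exact j₂.2
          exfalso; apply hci
          rw [hcB]; simp [Pi.single_apply, h1, h2]
        exact mul_nonneg hipos.le (sq_nonneg _)
    · rcases not_and_or.mp hab with ha | hb
      · exact ⟨j₁.1, Finset.mem_univ _, by
          rw [hcB1]; exact mul_pos j₁.2 (by positivity)⟩
      · exact ⟨j₂.1, Finset.mem_univ _, by
          rw [hcB2]; exact mul_pos j₂.2 (by positivity)⟩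
  have hLx : L x = a • L u₁ + b • L u₂ := by
    rw [hx, map_add, _root_.map_smul, _root_.map_smul]
  have hAx : (L x) ⬝ᵥ A *ᵥ (L x) ≤ 0 := by
    rw [form_eq_sum_eigen A hAh (L x)]
    apply Finset.sum_nonpos
    intro i _
    by_cases hpos : 0 < hAh.eigenvalues i
    · have hz : (star UA *ᵥ L x) i = 0 := by
        rw [hLx, mulVec_add, mulVec_smul, mulVec_smul]
        simpa [mul_comm] using hker i hpos
      rw [hz]; simp
    · exact mul_nonpos_of_nonpos_of_nonneg (le_of_not_gt hpos) (sq_nonneg _)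
  have := hq x
  rw [this] at hAx
  linarith

lemma key_identity {V : Type*} [Fintype V] [DecidableEq V]
    (A : Matrix V V ℤ) (hsymm : ∀ i j, A i j = A j i) (e : V) (he : A e e = -1)
    (Acon : Matrix {i : V // i ≠ e} {i : V // i ≠ e} ℤ)
    (hAcon : ∀ i j, Acon i j = A i.1 j.1 + A i.1 e * A j.1 e)
    (x : {i : V // i ≠ e} → ℝ) (t : ℝ) (y : V → ℝ)
    (hy_e : y e = (∑ i : {i : V // i ≠ e}, (A i.1 e : ℝ) * x i) + t)
    (hy : ∀ i : {i : V // i ≠ e}, y i.1 = x i) :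
    y ⬝ᵥ (matReal A) *ᵥ y = x ⬝ᵥ (matReal Acon) *ᵥ x - t^2 := by
  set S : ℝ := ∑ i : {i : V // i ≠ e}, (A i.1 e : ℝ) * x i with hS
  have expand : y ⬝ᵥ (matReal A) *ᵥ y =
      (y e * (A e e : ℝ) * y e + ∑ j : {i : V // i ≠ e}, y e * (A e j.1 : ℝ) * y j.1)
      + ∑ i : {i : V // i ≠ e},
          (y i.1 * (A i.1 e : ℝ) * y e + ∑ j : {i : V // i ≠ e}, y i.1 * (A i.1 j.1 : ℝ) * y j.1) := by
    rw [form_expand, sum_split e]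
    congr 1
    · exact sum_split e _
    · exact Finset.sum_congr rfl fun i _ => sum_split e _
  have h1 : ∑ j : {i : V // i ≠ e}, y e * (A e j.1 : ℝ) * y j.1 = (S + t) * S := by
    rw [← hy_e, Finset.mul_sum]
    exact Finset.sum_congr rfl fun j _ => by rw [hy, hsymm e j.1]; ring
  have h2 : ∑ i : {i : V // i ≠ e}, y i.1 * (A i.1 e : ℝ) * y e = S * (S + t) := by
    rw [← hy_e, Finset.sum_mul]
    exact Finset.sum_congr rfl fun i _ => by rw [hy]; ring
  have h3 : x ⬝ᵥ (matReal Acon) *ᵥ x =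
      (∑ i : {i : V // i ≠ e}, ∑ j : {i : V // i ≠ e}, x i * (A i.1 j.1 : ℝ) * x j) + S * S := by
    rw [form_expand]
    have : ∀ i j : {i : V // i ≠ e},
        x i * matReal Acon i j * x j
          = x i * (A i.1 j.1 : ℝ) * x j + ((A i.1 e : ℝ) * x i) * ((A j.1 e : ℝ) * x j) := by
      intro i j
      have : matReal Acon i j = (A i.1 j.1 : ℝ) + (A i.1 e : ℝ) * (A j.1 e : ℝ) := by
        simp only [matReal, Matrix.map_apply, hAcon]
        push_cast
        ring
      rw [this]; ring
    simp only [this]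
    simp only [Finset.sum_add_distrib]
    congr 1
    rw [hS, Finset.sum_mul_sum]
  have h4 : ∑ i : {i : V // i ≠ e},
      (y i.1 * (A i.1 e : ℝ) * y e + ∑ j : {i : V // i ≠ e}, y i.1 * (A i.1 j.1 : ℝ) * y j.1)
      = S * (S + t) + ∑ i : {i : V // i ≠ e}, ∑ j : {i : V // i ≠ e}, x i * (A i.1 j.1 : ℝ) * x j := by
    rw [Finset.sum_add_distrib, h2]
    congr 1
    exact Finset.sum_congr rfl fun i _ => Finset.sum_congr rfl fun j _ => by rw [hy, hy]
  rw [expand, h1, h4, h3, hy_e, he]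
  push_cast
  ring

lemma matReal_isHermitian {V : Type*} [Fintype V] (A : Matrix V V ℤ)
    (hA : ∀ i j, A i j = A j i) : (matReal A).IsHermitian := by
  rw [Matrix.IsHermitian, conjTranspose_eq_transpose_of_trivial]
  ext i j
  simp [matReal, hA i j]

end Helpers


/-- Contraction preserves log canonicity: if `A` is a log canonical system indexed by
`Fin (n+1)` with `n ≥ 1`, and `e` is a contractible element of the first kind, then the
contracted matrix `Acon i j = A i j + A i e * A j e`, indexed by the indices different
from `e`, is again a (log canonical) system. -/
theorem contraction_preserves_logCanonical {n : ℕ} (hn : 1 ≤ n)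
    (A : Matrix (Fin (n + 1)) (Fin (n + 1)) ℤ)
    (hsys : IsSystem A) (hlc : IsLogCanonical A)
    (e : Fin (n + 1)) (he : A e e = -1) (hcon : Contractible A e)
    (Acon : Matrix {i : Fin (n + 1) // i ≠ e} {i : Fin (n + 1) // i ≠ e} ℤ)
    (hAcon : ∀ i j : {i : Fin (n + 1) // i ≠ e},
      Acon i j = A i.val j.val + A i.val e * A j.val e) :
    IsSystem Acon ∧ IsLogCanonical Acon := by
  obtain ⟨-, hsymm0, hdiag, hoff, heig⟩ := hsys
  have hsymm : ∀ i j, A i j = A j i := fun i j => by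
    have := congrFun (congrFun hsymm0 j) i
    simpa using this
  have hAe01 : ∀ i : {i : Fin (n+1) // i ≠ e}, A i.1 e = 0 ∨ A i.1 e = 1 := fun i =>
    (hcon i.1 i.2).imp id And.right
  -- the linear map realizing the contraction
  have hLadd : ∀ (x z : {i : Fin (n + 1) // i ≠ e} → ℝ) (j : Fin (n+1)),
      (if h : j = e then ∑ i : {i : Fin (n + 1) // i ≠ e}, (A i.1 e : ℝ) * (x i + z i) else (x + z) ⟨j, h⟩)
      = (if h : j = e then ∑ i : {i : Fin (n + 1) // i ≠ e}, (A i.1 e : ℝ) * x i else x ⟨j, h⟩)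
        + (if h : j = e then ∑ i : {i : Fin (n + 1) // i ≠ e}, (A i.1 e : ℝ) * z i else z ⟨j, h⟩) := by
    intro x z j
    by_cases h : j = e
    · simp only [h, dif_pos, ← Finset.sum_add_distrib]
      exact Finset.sum_congr rfl fun i _ => by ring
    · simp [h]
  set L : ({i : Fin (n + 1) // i ≠ e} → ℝ) →ₗ[ℝ] (Fin (n + 1) → ℝ) :=
    { toFun := fun x j => if h : j = e then ∑ i : {i : Fin (n + 1) // i ≠ e}, (A i.1 e : ℝ) * x i else x ⟨j, h⟩
      map_add' := fun x z => funext fun j => hLadd x z j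
      map_smul' := fun c x => funext fun j => by
        by_cases h : j = e
        · simp only [h, dif_pos, RingHom.id_apply, Pi.smul_apply, smul_eq_mul, Finset.mul_sum]
          exact Finset.sum_congr rfl fun i _ => by ring
        · simp [h] } with hLdef
  have hLe : ∀ x : {i : Fin (n + 1) // i ≠ e} → ℝ, L x e = (∑ i : {i : Fin (n + 1) // i ≠ e}, (A i.1 e : ℝ) * x i) := fun x => by
    simp [hLdef]
  have hLne : ∀ (x : {i : Fin (n + 1) // i ≠ e} → ℝ) (i : {i : Fin (n + 1) // i ≠ e}), L x i.1 = x i := fun x i => by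
    simp [hLdef, i.2]
  have hq : ∀ x : {i : Fin (n + 1) // i ≠ e} → ℝ, (L x) ⬝ᵥ (matReal A) *ᵥ (L x) = x ⬝ᵥ (matReal Acon) *ᵥ x := by
    intro x
    have := key_identity A hsymm e he Acon hAcon x 0 (L x)
      (by rw [hLe]; ring) (hLne x)
    simpa using this
  have hconHerm : (matReal Acon).IsHermitian :=
    matReal_isHermitian Acon (fun i j => by rw [hAcon, hAcon, hsymm i.1 j.1, hsymm i.1 e,
      hsymm j.1 e, mul_comm])
  have hsys' : IsSystem Acon := by
    refine ⟨?_, ?_, ?_, ?_, ?_⟩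
    · obtain ⟨i, hi⟩ := Fintype.exists_ne_of_one_lt_card (by simp; omega) e
      exact ⟨⟨i, hi⟩⟩
    · ext i j
      rw [Matrix.transpose_apply, hAcon, hAcon, hsymm i.1 j.1, hsymm i.1 e, hsymm j.1 e,
        mul_comm]
    · intro i
      rw [hAcon]
      rcases hcon i.1 i.2 with h | ⟨h2, h1⟩
      · rw [h]; simpa using hdiag i.1
      · rw [h1]; omega
    · intro i j hij
      rw [hAcon]
      have h1 : (0:ℤ) ≤ A i.1 j.1 := hoff i.1 j.1 (fun h => hij (Subtype.ext h))
      rcases hAe01 i with h | h <;> rcases hAe01 j with h' | h' <;> rw [h, h'] <;> omega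
    · exact atMostOnePosEig_transfer (matReal A) (matReal Acon) hconHerm L hq heig
  refine ⟨hsys', ?_⟩
  intro s hnds al hal
  classical
  set emb : {i : Fin (n+1) // i ≠ e} ↪ Fin (n+1) := ⟨Subtype.val, Subtype.val_injective⟩
    with hemb
  set s' : Finset (Fin (n+1)) := insert e (s.map emb) with hs'
  have henotin : e ∉ s.map emb := by
    intro h
    obtain ⟨a, _, hav⟩ := Finset.mem_map.mp h
    exact a.2 hav
  have hmem : ∀ a : {i : Fin (n+1) // i ≠ e}, a ∈ s → a.1 ∈ s' := fun a ha =>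
    Finset.mem_insert_of_mem (Finset.mem_map.mpr ⟨a, ha, rfl⟩)
  have hes' : e ∈ s' := Finset.mem_insert_self e _
  -- negative definiteness of the extended subset
  have hndA : NegDefMat (matReal (subMat A s')) := by
    rw [negDefMat_subMat_iff]
    intro y hy0 hyne
    set x : {i : Fin (n+1) // i ≠ e} → ℝ := fun i => y i.1 with hx
    set S : ℝ := ∑ i : {i : Fin (n+1) // i ≠ e}, (A i.1 e : ℝ) * x i with hSd
    have hkey := key_identity A hsymm e he Acon hAcon x (y e - S) y (by ring) (fun i => rfl)
    have hxsupp : ∀ i : {i : Fin (n+1) // i ≠ e}, i ∉ s → x i = 0 := by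
      intro i hi
      apply hy0
      intro hmem2
      rcases Finset.mem_insert.mp hmem2 with h | h
      · exact i.2 h
      · obtain ⟨a, ha, hav⟩ := Finset.mem_map.mp h
        exact hi (by rwa [show i = a from Subtype.ext hav.symm])
    by_cases hxz : x = 0
    · have hS0 : S = 0 := by
        rw [hSd]
        apply Finset.sum_eq_zero
        intro i _
        rw [congrFun hxz i]
        simp
      have hye : y e ≠ 0 := by
        intro h0
        apply hyne
        funext j
        by_cases hj : j = e
        · rw [hj]; exact h0
        · exact congrFun hxz ⟨j, hj⟩
      have hx0 : x ⬝ᵥ (matReal Acon) *ᵥ x = 0 := by rw [hxz]; simp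
      rw [hkey, hx0, hS0]
      have h2 : 0 < (y e - 0)^2 :=
        lt_of_le_of_ne (sq_nonneg _) (Ne.symm (pow_ne_zero 2 (by rwa [sub_zero])))
      linarith
    · have hneg : x ⬝ᵥ (matReal Acon) *ᵥ x < 0 :=
        (negDefMat_subMat_iff Acon s).mp hnds x hxsupp hxz
      rw [hkey]
      nlinarith [sq_nonneg (y e - S)]
  -- canonical coefficients on s'
  set Se : ℝ := ∑ j ∈ s, (A j.1 e : ℝ) * al j with hSe
  set α : Fin (n+1) → ℝ := fun j => if h : j = e then 1 + Se else al ⟨j, h⟩ with hα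
  have hαe : α e = 1 + Se := by simp [hα]
  have hαa : ∀ a : {i : Fin (n+1) // i ≠ e}, α a.1 = al a := fun a => by
    simp [hα, a.2]
  have hsum' : ∀ f : Fin (n+1) → ℝ, ∑ j ∈ s', f j = f e + ∑ a ∈ s, f a.1 := by
    intro f
    rw [hs', Finset.sum_insert henotin, Finset.sum_map]
    rfl
  have heqs : ∀ i ∈ s', ∑ j ∈ s', (A i j : ℝ) * α j = -(A i i : ℝ) - 2 := by
    intro i hi
    by_cases hie : i = e
    · subst hie
      rw [hsum' (fun j => (A i j : ℝ) * α j)]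
      have hrest : ∑ a ∈ s, (A i a.1 : ℝ) * α a.1 = Se := by
        rw [hSe]
        exact Finset.sum_congr rfl fun a _ => by rw [hαa, hsymm i a.1]
      rw [hrest, hαe, he]
      push_cast
      ring
    · have hie' : (⟨i, hie⟩ : {x : Fin (n+1) // x ≠ e}) ∈ s := by
        rcases Finset.mem_insert.mp hi with h | h
        · exact absurd h hie
        · obtain ⟨a, ha, hav⟩ := Finset.mem_map.mp h
          rwa [show (⟨i, hie⟩ : {x : Fin (n+1) // x ≠ e}) = a from Subtype.ext hav.symm]
      set a : {x : Fin (n+1) // x ≠ e} := ⟨i, hie⟩ with hadef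
      have key := hal a hie'
      have hexp : ∀ j : {x : Fin (n+1) // x ≠ e},
          (Acon a j : ℝ) * al j
            = (A a.1 j.1 : ℝ) * al j + (A a.1 e : ℝ) * ((A j.1 e : ℝ) * al j) := by
        intro j
        rw [hAcon]
        push_cast
        ring
      rw [Finset.sum_congr rfl (fun j _ => hexp j), Finset.sum_add_distrib,
        ← Finset.mul_sum, ← hSe] at key
      have hconaa : (Acon a a : ℝ) = (A a.1 a.1 : ℝ) + (A a.1 e : ℝ) * (A a.1 e : ℝ) := by
        rw [hAcon]; push_cast; ring
      rw [hconaa] at key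
      have hsq : (A a.1 e : ℝ) * (A a.1 e : ℝ) = (A a.1 e : ℝ) := by
        rcases hAe01 a with h | h <;> rw [h] <;> norm_num
      rw [hsum' (fun j => (A i j : ℝ) * α j)]
      have hrest : ∑ b ∈ s, (A i b.1 : ℝ) * α b.1 = ∑ b ∈ s, (A a.1 b.1 : ℝ) * al b :=
        Finset.sum_congr rfl fun b _ => by rw [hαa]
      rw [hrest, hαe]
      have hii : (A i i : ℝ) = (A a.1 a.1 : ℝ) := rfl
      have hie2 : (A i e : ℝ) = (A a.1 e : ℝ) := rfl
      rw [hii, hie2]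
      nlinarith [key, hsq]
  obtain ⟨hge, hgt⟩ := hlc s' hndA α heqs
  refine ⟨fun i hi => ?_, ?_⟩
  · have := hge i.1 (hmem i hi)
    rwa [hαa] at this
  · intro i f hf hreach
    set φ : {x : {i : Fin (n+1) // i ≠ e} // x ∈ s} → {x : Fin (n+1) // x ∈ s'} :=
      fun a => ⟨a.1.1, hmem a.1 a.2⟩ with hφ
    set ee : {x : Fin (n+1) // x ∈ s'} := ⟨e, hes'⟩ with hee
    have hG2 : ∀ (u v : Fin (n+1)) (hu : u ∈ s') (hv : v ∈ s'), u ≠ v → 0 < A u v →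
        ((sysGraph A).comap (Subtype.val : {x // x ∈ s'} → Fin (n+1))).Adj ⟨u, hu⟩ ⟨v, hv⟩ := by
      intro u v hu hv huv hpos
      show (sysGraph A).Adj u v
      rw [sysGraph, SimpleGraph.fromRel_adj]
      exact ⟨huv, Or.inl hpos⟩
    have hadj : ∀ a b : {x : {i : Fin (n+1) // i ≠ e} // x ∈ s},
        ((sysGraph Acon).comap (Subtype.val : _ → {i : Fin (n+1) // i ≠ e})).Adj a b →
        ((sysGraph A).comap (Subtype.val : {x // x ∈ s'} → Fin (n+1))).Reachable (φ a) (φ b) := by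
      intro a b hab
      have hab' : (sysGraph Acon).Adj a.1 b.1 := hab
      rw [sysGraph, SimpleGraph.fromRel_adj] at hab'
      obtain ⟨hne, hor⟩ := hab'
      have hpos : 0 < Acon a.1 b.1 := by
        rcases hor with h | h
        · exact h
        · have hcs : Acon a.1 b.1 = Acon b.1 a.1 := by
            rw [hAcon, hAcon, hsymm a.1.1 b.1.1, mul_comm]
          rw [hcs]; exact h
      have hvne : a.1.1 ≠ b.1.1 := fun h => hne (Subtype.ext h)
      rw [hAcon] at hpos
      by_cases hAab : 0 < A a.1.1 b.1.1
      · exact (hG2 a.1.1 b.1.1 (hmem a.1 a.2) (hmem b.1 b.2) hvne hAab).reachable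
      · have hge0 : 0 ≤ A a.1.1 b.1.1 := hoff a.1.1 b.1.1 hvne
        have h1 : A a.1.1 e = 1 := by
          rcases hAe01 a.1 with h | h
          · rw [h] at hpos; omega
          · exact h
        have h2 : A b.1.1 e = 1 := by
          rcases hAe01 b.1 with h | h
          · rw [h] at hpos; omega
          · exact h
        have hae : ((sysGraph A).comap (Subtype.val : {x // x ∈ s'} → Fin (n+1))).Adj
            (φ a) ee := hG2 a.1.1 e (hmem a.1 a.2) hes' a.1.2 (by rw [h1]; norm_num)
        have heb : ((sysGraph A).comap (Subtype.val : {x // x ∈ s'} → Fin (n+1))).Adj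
            ee (φ b) := hG2 e b.1.1 hes' (hmem b.1 b.2) (Ne.symm b.1.2)
              (by rw [hsymm e b.1.1, h2]; norm_num)
        exact hae.reachable.trans heb.reachable
    have hwalk : ∀ {a b : {x : {i : Fin (n+1) // i ≠ e} // x ∈ s}},
        ((sysGraph Acon).comap (Subtype.val : _ → {i : Fin (n+1) // i ≠ e})).Walk a b →
        ((sysGraph A).comap (Subtype.val : {x // x ∈ s'} → Fin (n+1))).Reachable (φ a) (φ b) := by
      intro a b w
      induction w with
      | nil => exact SimpleGraph.Reachable.refl _
      | cons h p ih => exact ((hadj _ _ h).trans ih)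
    obtain ⟨w⟩ := hreach
    have hreach2 := hwalk w
    rw [hAcon] at hf
    rcases hAe01 f.1 with h0 | h1
    · have hff : A f.1.1 f.1.1 = -1 := by rw [h0] at hf; omega
      have := hgt (φ i) (φ f) hff hreach2
      rwa [show α (φ i).1 = al i.1 from hαa i.1] at this
    · have hadj_fe : ((sysGraph A).comap (Subtype.val : {x // x ∈ s'} → Fin (n+1))).Adj
          (φ f) ee := hG2 f.1.1 e (hmem f.1 f.2) hes' f.1.2 (by rw [h1]; norm_num)
      have := hgt (φ i) ee he (hreach2.trans hadj_fe.reachable)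
      rwa [show α (φ i).1 = al i.1 from hαa i.1] at this
end
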